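/- Upper bound of Sanov's theorem for a single type class: if observations are i.i.d. from μ on a finite alphabet, then for any probability law ν that is a type of denominator n (i.e., nν(σ) ∈ ℕ for all σ), the probability that the empirical measure equals ν is at most exp(−n D(ν‖μ)). -/
import Mathlib


open scoped Classical

/-- KL divergence on a finite alphabet (natural log, convention `0 log 0 = 0`). -/
noncomputable def KLdiv {α : Type*} [Fintype α] (ν μ : α → ℝ) : ℝ :=
  ∑ σ, ν σ * Real.log (ν σ / μ σ)

lemma prod_comp_count {α : Type*} [Fintype α] [DecidableEq α] {n : ℕ}
    (f : α → ℝ) (g : Fin n → α) :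
    ∏ i, f (g i) = ∏ σ, f σ ^ (Finset.univ.filter fun i => g i = σ).card := by
  rw [Finset.prod_comp]
  refine Finset.prod_subset (Finset.subset_univ _) ?_
  intro x _ hx
  have : (Finset.univ.filter fun i => g i = x).card = 0 := by
    rw [Finset.card_eq_zero, Finset.filter_eq_empty_iff]
    intro i _
    exact fun h => hx (h ▸ Finset.mem_image_of_mem g (Finset.mem_univ i))
  simp [this]

/-- Sanov upper bound for a single type class: if observations are i.i.d. from
a strictly positive PL `μ`, then for any type `ν` of denominator `n`, the
probability that the empirical measure equals `ν` is at most
`exp(−n D(ν‖μ))`. -/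
theorem sanov_upper_bound_type_class {α : Type*} [Fintype α] [DecidableEq α]
    (μ : α → ℝ) (hμ0 : ∀ σ, 0 < μ σ) (hμ1 : ∑ σ, μ σ = 1)
    (n : ℕ) (hn : 1 ≤ n)
    (ν : α → ℝ) (hν0 : ∀ σ, 0 ≤ ν σ) (hν1 : ∑ σ, ν σ = 1)
    (htype : ∀ σ, ∃ m : ℕ, ν σ = (m : ℝ) / (n : ℝ)) :
    ∑ g ∈ Finset.univ.filter
        (fun g : Fin n → α =>
          ∀ σ, ν σ = (1 / (n : ℝ)) * ∑ i, (if g i = σ then (1 : ℝ) else 0)),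
      ∏ i, μ (g i)
    ≤ Real.exp (-(n : ℝ) * KLdiv ν μ) := by
  have hn0 : (0:ℝ) < n := by exact_mod_cast hn
  set c : ℝ := Real.exp (-(n : ℝ) * KLdiv ν μ) with hc
  -- key: on the type class, the μ-probability equals the ν-probability times c
  have key : ∀ g ∈ Finset.univ.filter
      (fun g : Fin n → α =>
        ∀ σ, ν σ = (1 / (n : ℝ)) * ∑ i, (if g i = σ then (1 : ℝ) else 0)),
      ∏ i, μ (g i) = (∏ i, ν (g i)) * c := by
    intro g hg
    rw [Finset.mem_filter] at hg
    have hcount : ∀ σ, ((Finset.univ.filter fun i => g i = σ).card : ℝ) = n * ν σ := by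
      intro σ
      have := hg.2 σ
      have hsum : ∑ i, (if g i = σ then (1:ℝ) else 0)
          = ((Finset.univ.filter fun i => g i = σ).card : ℝ) := by
        rw [Finset.card_filter, Nat.cast_sum]
        simp
      rw [hsum] at this
      rw [this]; field_simp
    rw [prod_comp_count μ g, prod_comp_count ν g]
    have hterm : ∀ σ : α,
        μ σ ^ (Finset.univ.filter fun i => g i = σ).card
        = ν σ ^ (Finset.univ.filter fun i => g i = σ).card
          * Real.exp (-(n:ℝ) * (ν σ * Real.log (ν σ / μ σ))) := by
      intro σ
      set m := (Finset.univ.filter fun i => g i = σ).card with hm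
      rcases eq_or_lt_of_le (hν0 σ) with h0 | hpos
      · have hm0 : m = 0 := by
          have h := hcount σ
          rw [← h0, mul_zero] at h
          exact_mod_cast h
        simp [hm0, ← h0]
      · have hmν : (m : ℝ) = n * ν σ := hcount σ
        have hμp := hμ0 σ
        have h1 : μ σ ^ m = Real.exp (m * Real.log (μ σ)) := by
          rw [Real.exp_nat_mul, Real.exp_log hμp]
        have h2 : ν σ ^ m = Real.exp (m * Real.log (ν σ)) := by
          rw [Real.exp_nat_mul, Real.exp_log hpos]
        rw [h1, h2, ← Real.exp_add]
        congr 1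
        rw [hmν, Real.log_div (ne_of_gt hpos) (ne_of_gt hμp)]
        ring
    calc ∏ σ, μ σ ^ (Finset.univ.filter fun i => g i = σ).card
        = ∏ σ, (ν σ ^ (Finset.univ.filter fun i => g i = σ).card
          * Real.exp (-(n:ℝ) * (ν σ * Real.log (ν σ / μ σ)))) :=
          Finset.prod_congr rfl fun σ _ => hterm σ
      _ = (∏ σ, ν σ ^ (Finset.univ.filter fun i => g i = σ).card)
          * ∏ σ, Real.exp (-(n:ℝ) * (ν σ * Real.log (ν σ / μ σ))) :=
          Finset.prod_mul_distrib
      _ = (∏ σ, ν σ ^ (Finset.univ.filter fun i => g i = σ).card) * c := by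
          rw [← Real.exp_sum, hc, KLdiv, Finset.mul_sum]
  rw [Finset.sum_congr rfl key, ← Finset.sum_mul]
  have hsum_le : ∑ g ∈ Finset.univ.filter
      (fun g : Fin n → α =>
        ∀ σ, ν σ = (1 / (n : ℝ)) * ∑ i, (if g i = σ then (1 : ℝ) else 0)),
      ∏ i, ν (g i) ≤ 1 := by
    calc _ ≤ ∑ g : Fin n → α, ∏ i, ν (g i) :=
            Finset.sum_le_sum_of_subset_of_nonneg (Finset.filter_subset _ _)
              (fun g _ _ => Finset.prod_nonneg fun i _ => hν0 (g i))
      _ = (∑ σ, ν σ) ^ n := (Fintype.sum_pow ν n).symm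
      _ = 1 := by rw [hν1, one_pow]
  have := mul_le_mul_of_nonneg_right hsum_le (Real.exp_pos (-(n : ℝ) * KLdiv ν μ)).le
  rw [one_mul] at this
  exact this
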